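/- Consider the star with ℓ leaves and diameter 2d (each leaf connected to the center by a path of length d), and let t be the number of categories containing the center in a good system of categories. Then t ln t ≥ d ln ℓ / 32. -/

import Mathlib

open Finset SimpleGraph

variable {V : Type*}

def catDist [DecidableEq V] (S : Finset (Finset V)) (s t : V) : ℕ :=
  (S.filter fun C => t ∈ C ∧ s ∉ C).card

def IsGoodSystem [DecidableEq V] (G : SimpleGraph V) (S : Finset (Finset V)) : Prop :=
  (∀ C ∈ S, (G.induce (C : Set V)).Connected) ∧
    ∀ s t : V, s ≠ t → ∃ u, G.Adj s u ∧ catDist S u t < catDist S s t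

def memdim [DecidableEq V] [Fintype V] (S : Finset (Finset V)) : ℕ :=
  univ.sup fun v : V => (S.filter fun C => v ∈ C).card

noncomputable def graphDiam [Fintype V] (G : SimpleGraph V) : ℕ :=
  univ.sup fun p : V × V => G.dist p.1 p.2

noncomputable def minMemdim (V : Type*) [DecidableEq V] [Fintype V] (G : SimpleGraph V) : ℕ :=
  sInf {m | ∃ S : Finset (Finset V), IsGoodSystem G S ∧ memdim S = m}

def longStarAdj (ℓ d : ℕ) : Option (Fin ℓ × Fin d) → Option (Fin ℓ × Fin d) → Prop
  | none, none => False
  | none, some (_, k) => k.val = 0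
  | some (_, k), none => k.val = 0
  | some (i, j), some (i', k) => i = i' ∧ (j.val + 1 = k.val ∨ k.val + 1 = j.val)

def longStar (ℓ d : ℕ) : SimpleGraph (Option (Fin ℓ × Fin d)) where
  Adj := longStarAdj ℓ d
  symm := by
    constructor
    rintro (_ | ⟨i, j⟩) (_ | ⟨i', k⟩) h <;> simp_all [longStarAdj]
    omega
  loopless := by
    constructor
    rintro (_ | ⟨i, j⟩) h <;> simp_all [longStarAdj]

section StarAux

variable {ℓ d : ℕ}

private lemma star_adj_some {i : Fin ℓ} {k : Fin d} {u : Option (Fin ℓ × Fin d)}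
    (h : (longStar ℓ d).Adj (some (i, k)) u) :
    (u = none ∧ k.val = 0) ∨
      ∃ k' : Fin d, u = some (i, k') ∧ (k.val + 1 = k'.val ∨ k'.val + 1 = k.val) := by
  match u with
  | none => exact Or.inl ⟨rfl, h⟩
  | some (i', k') =>
    obtain ⟨rfl, h2⟩ := (h : longStarAdj ℓ d (some (i, k)) (some (i', k')))
    exact Or.inr ⟨k', rfl, h2⟩

private lemma walk_mem {C : Finset (Option (Fin ℓ × Fin d))}
    {x y : ↥((C : Set (Option (Fin ℓ × Fin d))))}
    (p : ((longStar ℓ d).induce (C : Set (Option (Fin ℓ × Fin d)))).Walk x y) :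
    ∀ (i : Fin ℓ) (a : Fin d), x.val = some (i, a) →
      (y.val = none ∨ ∀ b : Fin d, y.val ≠ some (i, b)) →
      none ∈ C ∧ ∀ m : Fin d, m.val ≤ a.val → some (i, m) ∈ C := by
  induction p with
  | nil =>
    intro i a hx hy
    rcases hy with hy | hy
    · rw [hx] at hy; exact absurd hy (by simp)
    · exact absurd hx (hy a)
  | @cons x u y hadj p ih =>
    intro i a hx hy
    have hadj' : (longStar ℓ d).Adj x.val u.val := hadj
    rw [hx] at hadj'
    rcases star_adj_some hadj' with ⟨hu, hk0⟩ | ⟨k', hu, hkk⟩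
    · refine ⟨by rw [← hu]; exact u.prop, ?_⟩
      intro m hm
      have hma : m = a := Fin.ext (by omega)
      rw [hma, ← hx]; exact x.prop
    · obtain ⟨hnone, hall⟩ := ih i k' hu hy
      refine ⟨hnone, fun m hm => ?_⟩
      rcases hkk with h1 | h1
      · exact hall m (by omega)
      · by_cases hma : m.val ≤ k'.val
        · exact hall m hma
        · have hma' : m = a := Fin.ext (by omega)
          rw [hma', ← hx]; exact x.prop

private lemma conn_mem {C : Finset (Option (Fin ℓ × Fin d))}
    (hconn : ((longStar ℓ d).induce (C : Set (Option (Fin ℓ × Fin d)))).Connected)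
    {i : Fin ℓ} {a : Fin d} (hx : some (i, a) ∈ C) {y : Option (Fin ℓ × Fin d)} (hy : y ∈ C)
    (hy' : y = none ∨ ∀ b : Fin d, y ≠ some (i, b)) :
    none ∈ C ∧ ∀ m : Fin d, m.val ≤ a.val → some (i, m) ∈ C := by
  obtain ⟨p⟩ := hconn.preconnected ⟨some (i, a), hx⟩ ⟨y, hy⟩
  exact walk_mem p i a rfl hy'

private def depth (C : Finset (Option (Fin ℓ × Fin d))) (i : Fin ℓ) : ℕ :=
  (univ.filter fun m : Fin d => some (i, m) ∈ C).card

private lemma depth_le {C : Finset (Option (Fin ℓ × Fin d))}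
    (hconn : ((longStar ℓ d).induce (C : Set (Option (Fin ℓ × Fin d)))).Connected)
    (hc : none ∈ C) {i : Fin ℓ} {a : Fin d} (ha : some (i, a) ∉ C) :
    depth C i ≤ a.val := by
  have hsub : (univ.filter fun m : Fin d => some (i, m) ∈ C) ⊆ Finset.Iio a := by
    intro m hm
    rw [Finset.mem_filter] at hm
    rw [Finset.mem_Iio]
    by_contra hma
    push_neg at hma
    exact ha ((conn_mem hconn hm.2 hc (Or.inl rfl)).2 a (by
      exact_mod_cast Fin.le_iff_val_le_val.mp hma))
  calc depth C i ≤ (Finset.Iio a).card := Finset.card_le_card hsub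
    _ = a.val := Fin.card_Iio a

private lemma lt_depth {C : Finset (Option (Fin ℓ × Fin d))}
    (hconn : ((longStar ℓ d).induce (C : Set (Option (Fin ℓ × Fin d)))).Connected)
    (hc : none ∈ C) {i : Fin ℓ} {a : Fin d} (ha : some (i, a) ∈ C) :
    a.val < depth C i := by
  have hsub : Finset.Iic a ⊆ (univ.filter fun m : Fin d => some (i, m) ∈ C) := by
    intro m hm
    rw [Finset.mem_Iic] at hm
    rw [Finset.mem_filter]
    exact ⟨Finset.mem_univ _, (conn_mem hconn ha hc (Or.inl rfl)).2 m hm⟩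
  calc a.val < a.val + 1 := Nat.lt_succ_self _
    _ = (Finset.Iic a).card := (Fin.card_Iic a).symm
    _ ≤ depth C i := Finset.card_le_card hsub

private lemma exists_sep_mem {α : Type*} [DecidableEq α] {s t : Finset α}
    (h : t.card < s.card) : ∃ x ∈ s, x ∉ t := by
  by_contra hc
  push_neg at hc
  exact absurd (Finset.card_le_card hc) (Nat.not_le.mpr h)

private lemma separation {S : Finset (Finset (Option (Fin ℓ × Fin d)))}
    (hS : IsGoodSystem (longStar ℓ d) S) {i j : Fin ℓ} (hij : i ≠ j) (k : Fin d) :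
    ∃ C ∈ S, none ∈ C ∧ depth C i = k.val ∧ k.val < depth C j := by
  obtain ⟨u, hadj, hlt⟩ := hS.2 (some (i, k)) (some (j, k)) (by simp [hij])
  have hyne : ∀ b : Fin d, (some (j, k) : Option (Fin ℓ × Fin d)) ≠ some (i, b) := by
    intro b hb
    simp only [Option.some.injEq, Prod.mk.injEq] at hb
    exact hij hb.1.symm
  rcases star_adj_some hadj with ⟨rfl, hk0⟩ | ⟨k', rfl, hkk⟩
  · -- u = none, k = 0
    obtain ⟨C, hC1, hC2⟩ := exists_sep_mem hlt
    rw [Finset.mem_filter] at hC1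
    obtain ⟨hCS, hjC, hiC⟩ := hC1
    have hnC : none ∈ C := by
      by_contra hn
      exact hC2 (Finset.mem_filter.mpr ⟨hCS, hjC, hn⟩)
    have hconn := hS.1 C hCS
    refine ⟨C, hCS, hnC, ?_, lt_depth hconn hnC hjC⟩
    have := depth_le hconn hnC hiC
    omega
  rcases hkk with hkk | hkk
  · -- u = some (i, k') with k + 1 = k' : contradiction
    exfalso
    have hsub : (S.filter fun C => some (j, k) ∈ C ∧ some (i, k) ∉ C) ⊆
        (S.filter fun C => some (j, k) ∈ C ∧ some (i, k') ∉ C) := by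
      intro C hC
      rw [Finset.mem_filter] at hC ⊢
      refine ⟨hC.1, hC.2.1, fun hu => hC.2.2 ?_⟩
      exact (conn_mem (hS.1 C hC.1) hu hC.2.1 (Or.inr hyne)).2 k (by omega)
    exact absurd (Finset.card_le_card hsub) (Nat.not_le.mpr hlt)
  · -- u = some (i, k') with k' + 1 = k
    obtain ⟨C, hC1, hC2⟩ := exists_sep_mem hlt
    rw [Finset.mem_filter] at hC1
    obtain ⟨hCS, ⟨hjC, hiC⟩⟩ := hC1
    have huC : some (i, k') ∈ C := by
      by_contra hn
      exact hC2 (Finset.mem_filter.mpr ⟨hCS, hjC, hn⟩)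
    have hconn := hS.1 C hCS
    have hnC : none ∈ C := (conn_mem hconn huC hjC (Or.inr hyne)).1
    have h1 := depth_le hconn hnC hiC
    have h2 := lt_depth hconn hnC huC
    exact ⟨C, hCS, hnC, by omega, lt_depth hconn hnC hjC⟩

private lemma sum_depth_le (T : Finset (Finset (Option (Fin ℓ × Fin d)))) (i : Fin ℓ) :
    ∑ k : Fin d, (T.filter fun C => depth C i = k.val).card ≤ T.card := by
  classical
  set T' := T.filter (fun C => depth C i < d) with hT'
  have hfib : T'.card = ∑ b ∈ Finset.range d, (T'.filter fun C => depth C i = b).card :=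
    Finset.card_eq_sum_card_fiberwise (fun C hC => by
      rw [Finset.mem_coe, Finset.mem_range]; exact (Finset.mem_filter.mp (Finset.mem_coe.mp hC)).2)
  have heq : ∀ b ∈ Finset.range d,
      (T'.filter fun C => depth C i = b) = (T.filter fun C => depth C i = b) := by
    intro b hb
    rw [Finset.mem_range] at hb
    rw [hT', Finset.filter_filter]
    apply Finset.filter_congr
    intro C _
    constructor
    · rintro ⟨_, h⟩; exact h
    · rintro h; exact ⟨by omega, h⟩
  calc ∑ k : Fin d, (T.filter fun C => depth C i = k.val).card
      = ∑ b ∈ Finset.range d, (T.filter fun C => depth C i = b).card :=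
        Fin.sum_univ_eq_sum_range (fun b => (T.filter fun C => depth C i = b).card) d
    _ = ∑ b ∈ Finset.range d, (T'.filter fun C => depth C i = b).card :=
        (Finset.sum_congr rfl fun b hb => by rw [heq b hb])
    _ = T'.card := hfib.symm
    _ ≤ T.card := Finset.card_le_card (Finset.filter_subset _ _)

private lemma card_small_subsets {α : Type*} [DecidableEq α] (T : Finset α) (w : ℕ) :
    ((T.powerset).filter fun s => s.card ≤ w).card ≤ (T.card + 1) ^ w := by
  induction w with
  | zero =>
    have hsub : (T.powerset).filter (fun s => s.card ≤ 0) ⊆ {∅} := by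
      intro s hs
      rw [Finset.mem_filter] at hs
      rw [Finset.mem_singleton]
      exact Finset.card_eq_zero.mp (Nat.le_zero.mp hs.2)
    calc _ ≤ ({∅} : Finset (Finset α)).card := Finset.card_le_card hsub
      _ = 1 := rfl
      _ ≤ _ := by simp
  | succ w ih =>
    have hsub : (T.powerset).filter (fun s => s.card ≤ w + 1) ⊆
        ((T.powerset).filter fun s => s.card ≤ w) ∪ T.powersetCard (w + 1) := by
      intro s hs
      rw [Finset.mem_filter, Finset.mem_powerset] at hs
      rw [Finset.mem_union, Finset.mem_filter, Finset.mem_powerset, Finset.mem_powersetCard]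
      rcases Nat.lt_or_ge s.card (w + 1) with h | h
      · exact Or.inl ⟨hs.1, by omega⟩
      · exact Or.inr ⟨hs.1, by omega⟩
    calc ((T.powerset).filter fun s => s.card ≤ w + 1).card
        ≤ (((T.powerset).filter fun s => s.card ≤ w) ∪ T.powersetCard (w + 1)).card :=
          Finset.card_le_card hsub
      _ ≤ ((T.powerset).filter fun s => s.card ≤ w).card + (T.powersetCard (w + 1)).card :=
          Finset.card_union_le _ _
      _ ≤ (T.card + 1) ^ w + T.card.choose (w + 1) := by
          rw [Finset.card_powersetCard]; exact Nat.add_le_add_right ih _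
      _ ≤ (T.card + 1) ^ w + T.card ^ (w + 1) := by
          exact Nat.add_le_add_left (Nat.choose_le_pow _ _) _
      _ ≤ (T.card + 1) ^ (w + 1) := by
          have h1 : T.card ^ (w + 1) ≤ T.card * (T.card + 1) ^ w := by
            rw [pow_succ, mul_comm]
            exact Nat.mul_le_mul_left _ (Nat.pow_le_pow_left (Nat.le_succ _) w)
          calc (T.card + 1) ^ w + T.card ^ (w + 1)
              ≤ (T.card + 1) ^ w + T.card * (T.card + 1) ^ w := Nat.add_le_add_left h1 _
            _ = (T.card + 1) ^ (w + 1) := by ring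

private lemma level_bound {α : Type*} [DecidableEq α] {n : ℕ} (T : Finset α)
    (A : Fin n → Finset α) (hsub : ∀ i, A i ⊆ T)
    (hinj : Function.Injective A) (w : ℕ) :
    (w + 1) * n ≤ (w + 1) * (T.card + 1) ^ w + ∑ i, (A i).card := by
  classical
  set s1 := univ.filter fun i : Fin n => (A i).card ≤ w with hs1
  set s2 := univ.filter fun i : Fin n => ¬ (A i).card ≤ w with hs2
  have hcard : s1.card + s2.card = n := by
    rw [hs1, hs2, Finset.card_filter_add_card_filter_not]
    simp
  have h1 : s1.card ≤ (T.card + 1) ^ w := by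
    refine le_trans (Finset.card_le_card_of_injOn A (fun i hi => ?_) (hinj.injOn))
      (card_small_subsets T w)
    rw [Finset.mem_coe, Finset.mem_filter, Finset.mem_powerset]
    rw [hs1, Finset.mem_coe, Finset.mem_filter] at hi
    exact ⟨hsub i, hi.2⟩
  have h2 : (w + 1) * s2.card ≤ ∑ i ∈ s2, (A i).card := by
    calc (w + 1) * s2.card = ∑ _i ∈ s2, (w + 1) := by
          rw [Finset.sum_const, smul_eq_mul, mul_comm]
      _ ≤ ∑ i ∈ s2, (A i).card := Finset.sum_le_sum fun i hi => by
          rw [hs2, Finset.mem_filter] at hi; omega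
  have h3 : ∑ i ∈ s2, (A i).card ≤ ∑ i, (A i).card :=
    Finset.sum_le_sum_of_subset (Finset.filter_subset _ _)
  have h4 : (w + 1) * n = (w + 1) * s1.card + (w + 1) * s2.card := by
    calc (w + 1) * n = (w + 1) * (s1.card + s2.card) := by rw [hcard]
      _ = _ := by ring
  have h5 : (w + 1) * s1.card ≤ (w + 1) * (T.card + 1) ^ w := Nat.mul_le_mul_left _ h1
  omega

end StarAux

theorem stmt15 (ℓ d : ℕ) (hℓ : 2 ≤ ℓ) (hd : 1 ≤ d)
    (S : Finset (Finset (Option (Fin ℓ × Fin d))))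
    (hS : IsGoodSystem (longStar ℓ d) S) :
    (d : ℝ) * Real.log ℓ / 32 ≤
      ((S.filter fun C => (none : Option (Fin ℓ × Fin d)) ∈ C).card : ℝ) *
        Real.log ((S.filter fun C => (none : Option (Fin ℓ × Fin d)) ∈ C).card) := by
  classical
  set T := S.filter (fun C => (none : Option (Fin ℓ × Fin d)) ∈ C) with hT
  set t₀ := T.card with ht₀
  set A : Fin d → Fin ℓ → Finset (Finset (Option (Fin ℓ × Fin d))) :=
    fun k i => T.filter fun C => depth C i = k.val with hA
  -- separation in terms of A
  have hsep : ∀ (k : Fin d) (i j : Fin ℓ), i ≠ j → ∃ C, C ∈ A k i ∧ C ∉ A k j := by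
    intro k i j hij
    obtain ⟨C, hCS, hnone, hdi, hdj⟩ := separation hS hij k
    refine ⟨C, ?_, ?_⟩
    · rw [hA]; exact Finset.mem_filter.mpr ⟨Finset.mem_filter.mpr ⟨hCS, hnone⟩, hdi⟩
    · rw [hA]
      intro hmem
      rw [Finset.mem_filter] at hmem
      omega
  have hs_inj : ∀ k : Fin d, Function.Injective (A k) := by
    intro k i j hij'
    by_contra hne
    obtain ⟨C, h1, h2⟩ := hsep k i j hne
    rw [hij'] at h1
    exact h2 h1
  have hs_ne : ∀ (k : Fin d) (i : Fin ℓ), (A k i).Nonempty := by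
    intro k i
    obtain ⟨j, hj⟩ : ∃ j : Fin ℓ, i ≠ j := by
      by_cases h0 : i.val = 0
      · exact ⟨⟨1, by omega⟩, by intro h; rw [h] at h0; simp at h0⟩
      · exact ⟨⟨0, by omega⟩, by intro h; rw [h] at h0; simp at h0⟩
    obtain ⟨C, h1, _⟩ := hsep k i j hj
    exact ⟨C, h1⟩
  have hAsubT : ∀ (k : Fin d) (i : Fin ℓ), A k i ⊆ T := by
    intro k i; rw [hA]; exact Finset.filter_subset _ _
  -- t₀ ≥ 2
  have ht2 : 2 ≤ t₀ := by
    by_contra h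
    push_neg at h
    set k0 : Fin d := ⟨0, hd⟩
    have heq : ∀ i : Fin ℓ, A k0 i = T := by
      intro i
      apply Finset.eq_of_subset_of_card_le (hAsubT k0 i)
      have := Finset.card_pos.mpr (hs_ne k0 i)
      omega
    have hi01 : (⟨0, by omega⟩ : Fin ℓ) ≠ ⟨1, by omega⟩ := by
      intro hc
      have := Fin.val_eq_of_eq hc
      simp at this
    exact hi01 (hs_inj k0 ((heq _).trans (heq _).symm))
  -- per-arm sum over levels
  have hsum_le : ∀ i : Fin ℓ, ∑ k : Fin d, (A k i).card ≤ t₀ :=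
    fun i => sum_depth_le T i
  -- d ≤ t₀
  have htd : d ≤ t₀ := by
    have h2 : d * ℓ ≤ t₀ * ℓ := by
      calc d * ℓ = ∑ _k : Fin d, ℓ := by
            rw [Finset.sum_const, Finset.card_univ, Fintype.card_fin, smul_eq_mul]
        _ ≤ ∑ k : Fin d, ∑ i : Fin ℓ, (A k i).card := Finset.sum_le_sum (fun k _ => by
            calc ℓ = ∑ _i : Fin ℓ, 1 := by simp
              _ ≤ _ := Finset.sum_le_sum fun i _ => Finset.card_pos.mpr (hs_ne k i))
        _ = ∑ i : Fin ℓ, ∑ k : Fin d, (A k i).card := Finset.sum_comm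
        _ ≤ ∑ _i : Fin ℓ, t₀ := Finset.sum_le_sum fun i _ => hsum_le i
        _ = t₀ * ℓ := by
            rw [Finset.sum_const, Finset.card_univ, Fintype.card_fin, smul_eq_mul, mul_comm]
    exact Nat.le_of_mul_le_mul_right h2 (by omega)
  -- global counting inequality
  have hGN : ∀ w : ℕ, (w + 1) * (d * ℓ) ≤ d * ((w + 1) * (t₀ + 1) ^ w) + t₀ * ℓ := by
    intro w
    have h1 : ∀ k : Fin d, (w + 1) * ℓ ≤ (w + 1) * (t₀ + 1) ^ w + ∑ i : Fin ℓ, (A k i).card :=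
      fun k => level_bound T (A k) (hAsubT k) (hs_inj k) w
    calc (w + 1) * (d * ℓ) = ∑ _k : Fin d, (w + 1) * ℓ := by
          rw [Finset.sum_const, Finset.card_univ, Fintype.card_fin, smul_eq_mul]; ring
      _ ≤ ∑ k : Fin d, ((w + 1) * (t₀ + 1) ^ w + ∑ i : Fin ℓ, (A k i).card) :=
          Finset.sum_le_sum fun k _ => h1 k
      _ = d * ((w + 1) * (t₀ + 1) ^ w) + ∑ k : Fin d, ∑ i : Fin ℓ, (A k i).card := by
          rw [Finset.sum_add_distrib, Finset.sum_const, Finset.card_univ, Fintype.card_fin,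
            smul_eq_mul]
      _ ≤ d * ((w + 1) * (t₀ + 1) ^ w) + t₀ * ℓ := by
          have : ∑ k : Fin d, ∑ i : Fin ℓ, (A k i).card ≤ t₀ * ℓ := by
            calc ∑ k : Fin d, ∑ i : Fin ℓ, (A k i).card
                = ∑ i : Fin ℓ, ∑ k : Fin d, (A k i).card := Finset.sum_comm
              _ ≤ ∑ _i : Fin ℓ, t₀ := Finset.sum_le_sum fun i _ => hsum_le i
              _ = t₀ * ℓ := by
                  rw [Finset.sum_const, Finset.card_univ, Fintype.card_fin, smul_eq_mul, mul_comm]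
          omega
  -- real arithmetic
  have hl2 : (2 : ℝ) ≤ (t₀ : ℝ) := by exact_mod_cast ht2
  have hlogt : 0 < Real.log t₀ := Real.log_pos (by linarith)
  have hdnn : (0 : ℝ) ≤ (d : ℝ) := Nat.cast_nonneg d
  have htnn : (0 : ℝ) ≤ (t₀ : ℝ) * Real.log t₀ :=
    mul_nonneg (Nat.cast_nonneg _) hlogt.le
  by_cases hcase : Real.log ℓ ≤ 16 * Real.log t₀
  · have hd' : (d : ℝ) ≤ (t₀ : ℝ) := by exact_mod_cast htd
    have h1 : (d : ℝ) * Real.log ℓ ≤ (d : ℝ) * (16 * Real.log t₀) :=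
      mul_le_mul_of_nonneg_left hcase hdnn
    have h2 : (d : ℝ) * Real.log t₀ ≤ (t₀ : ℝ) * Real.log t₀ :=
      mul_le_mul_of_nonneg_right hd' hlogt.le
    linarith [htnn]
  · push_neg at hcase
    have hlpos : (0 : ℝ) < (ℓ : ℝ) := by
      have : (2 : ℝ) ≤ (ℓ : ℝ) := by exact_mod_cast hℓ
      linarith
    have hlog1 : Real.log ((t₀ : ℝ) + 1) ≤ 2 * Real.log t₀ := by
      have hle : ((t₀ : ℝ) + 1) ≤ (t₀ : ℝ) ^ 2 := by nlinarith
      calc Real.log ((t₀ : ℝ) + 1) ≤ Real.log ((t₀ : ℝ) ^ 2) :=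
            Real.log_le_log (by linarith) hle
        _ = 2 * Real.log t₀ := by rw [Real.log_pow]; push_cast; ring
    have hlog1' : 0 < Real.log ((t₀ : ℝ) + 1) := Real.log_pos (by linarith)
    set x := Real.log ℓ / (2 * Real.log ((t₀ : ℝ) + 1)) with hx
    have hx4 : (4 : ℝ) ≤ x := by
      rw [hx, le_div_iff₀ (by positivity)]
      linarith
    have hxL : x * (2 * Real.log ((t₀ : ℝ) + 1)) = Real.log ℓ := by
      rw [hx]; field_simp
    have hW4 : 4 ≤ ⌊x⌋₊ := Nat.le_floor (by exact_mod_cast hx4)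
    obtain ⟨w, hw⟩ : ∃ w, ⌊x⌋₊ = w + 1 := ⟨⌊x⌋₊ - 1, by omega⟩
    have hWx : ((w : ℝ) + 1) ≤ x := by
      have := Nat.floor_le (show (0 : ℝ) ≤ x by linarith)
      rw [hw] at this
      push_cast at this
      linarith
    have hxW : x < (w : ℝ) + 2 := by
      have := Nat.lt_floor_add_one x
      rw [hw] at this
      push_cast at this
      linarith
    -- (t₀+1)^w ≤ ℓ/2
    have hpow : ((t₀ : ℝ) + 1) ^ w ≤ (ℓ : ℝ) / 2 := by
      have hwx : (w : ℝ) ≤ x := by linarith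
      have h1 : (w : ℝ) * Real.log ((t₀ : ℝ) + 1) ≤ Real.log ℓ / 2 := by
        have := mul_le_mul_of_nonneg_right hwx hlog1'.le
        linarith [hxL]
      have h2 : ((t₀ : ℝ) + 1) ^ w = Real.exp ((w : ℝ) * Real.log ((t₀ : ℝ) + 1)) := by
        rw [← Real.log_pow, Real.exp_log (by positivity)]
      have hl4 : (4 : ℝ) ≤ (ℓ : ℝ) := by
        by_contra hc
        push_neg at hc
        have hlog4 : Real.log ℓ < Real.log 4 := Real.log_lt_log hlpos hc
        have hlog24 : Real.log 4 = 2 * Real.log 2 := by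
          rw [show (4 : ℝ) = 2 ^ 2 by norm_num, Real.log_pow]; push_cast; ring
        have h2t : Real.log 2 ≤ Real.log t₀ := Real.log_le_log (by norm_num) hl2
        linarith [Real.log_pos (show (1:ℝ) < 2 by norm_num)]
      have h3 : Real.exp (Real.log ℓ / 2) ≤ (ℓ : ℝ) / 2 := by
        set a := Real.exp (Real.log ℓ / 2) with ha
        have ha2 : a * a = (ℓ : ℝ) := by
          rw [ha, ← Real.exp_add]
          rw [show Real.log ℓ / 2 + Real.log ℓ / 2 = Real.log ℓ by ring]
          exact Real.exp_log hlpos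
        nlinarith [Real.exp_pos (Real.log ℓ / 2)]
      calc ((t₀ : ℝ) + 1) ^ w = Real.exp ((w : ℝ) * Real.log ((t₀ : ℝ) + 1)) := h2
        _ ≤ Real.exp (Real.log ℓ / 2) := Real.exp_le_exp.mpr h1
        _ ≤ (ℓ : ℝ) / 2 := h3
    -- cast counting inequality and derive (w+1)*d ≤ 2*t₀
    have hGNr : ((w : ℝ) + 1) * ((d : ℝ) * (ℓ : ℝ)) ≤
        (d : ℝ) * (((w : ℝ) + 1) * ((t₀ : ℝ) + 1) ^ w) + (t₀ : ℝ) * (ℓ : ℝ) := by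
      have := hGN w
      exact_mod_cast this
    have hGNr' : (d : ℝ) * (((w : ℝ) + 1) * ((t₀ : ℝ) + 1) ^ w) ≤
        (d : ℝ) * (((w : ℝ) + 1) * ((ℓ : ℝ) / 2)) := by
      apply mul_le_mul_of_nonneg_left _ hdnn
      apply mul_le_mul_of_nonneg_left hpow (by positivity)
    have hX : (((w : ℝ) + 1) * (d : ℝ)) * (ℓ : ℝ) ≤ (2 * (t₀ : ℝ)) * (ℓ : ℝ) := by
      nlinarith [hGNr, hGNr']
    have hkey : ((w : ℝ) + 1) * (d : ℝ) ≤ 2 * (t₀ : ℝ) :=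
      le_of_mul_le_mul_right hX hlpos
    -- x lower-bounds via log t₀
    have hxlog : Real.log ℓ ≤ 4 * Real.log t₀ * x := by
      have hxpos : (0 : ℝ) ≤ x := by linarith
      linarith [mul_le_mul_of_nonneg_left hlog1 hxpos, hxL]
    have h6 : (3 / 4 : ℝ) * x ≤ (w : ℝ) + 1 := by linarith
    -- combine
    have hint1 : (d : ℝ) * Real.log ℓ ≤ (d : ℝ) * (4 * Real.log t₀ * x) :=
      mul_le_mul_of_nonneg_left hxlog hdnn
    have hint2 : ((3 / 4 : ℝ) * x) * ((d : ℝ) * Real.log t₀) ≤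
        ((w : ℝ) + 1) * ((d : ℝ) * Real.log t₀) :=
      mul_le_mul_of_nonneg_right h6 (mul_nonneg hdnn hlogt.le)
    have hint3 : (((w : ℝ) + 1) * (d : ℝ)) * Real.log t₀ ≤ (2 * (t₀ : ℝ)) * Real.log t₀ :=
      mul_le_mul_of_nonneg_right hkey hlogt.le
    linarith [hint1, hint2, hint3, htnn]
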